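/- Let Λ ⊆ ℤ² be a rank-2 sublattice and v ∈ Λ ∩ ℕ² with v visible in Λ and ‖v‖₁ ≤ vol(Λ). Then there exists a lattice path from 0 to v such that no difference between two distinct path nodes, other than v − 0, lies in Λ. -/

import Mathlib

/-- A nonzero point `v` of a rank-2 sublattice `Λ ⊆ ℤ²` is visible in `Λ` if no proper
fraction `(1/d) • v` with `d ≥ 2` lies in `Λ`. -/
def IsVisibleIn (Λ : AddSubgroup (ℤ × ℤ)) (v : ℤ × ℤ) : Prop :=
  ∀ d : ℕ, 2 ≤ d → ∀ w ∈ Λ, (d : ℤ) • w ≠ v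

lemma index_dvd_cross (Λ : AddSubgroup (ℤ × ℤ)) (hΛ : Λ.index ≠ 0)
    {d v : ℤ × ℤ} (hd : d ∈ Λ) (hv : v ∈ Λ) :
    (Λ.index : ℤ) ∣ (d.1 * v.2 - d.2 * v.1) := by
  classical
  set N : Submodule ℤ (ℤ × ℤ) := AddSubgroup.toIntSubmodule Λ with hN
  obtain ⟨n, snf⟩ := N.smithNormalForm (Module.Basis.finTwoProd ℤ)
  have hNΛ : N.toAddSubgroup = Λ := by
    ext x; simp [hN]
  have h2 : n = 2 := by
    have := snf.toAddSubgroup_index_ne_zero_iff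
    rw [hNΛ] at this
    simpa using this.mp hΛ
  subst h2
  obtain ⟨bM, bN, f, a, ha⟩ := snf
  have hidx : Λ.index = ((a 0).natAbs * (a 1).natAbs) := by
    have := (Module.Basis.SmithNormalForm.mk bM bN f a ha).toAddSubgroup_index_eq_ite
    rw [hNΛ] at this
    simpa [Fin.prod_univ_two, Int.index_zmultiples] using this
  have key : ∀ z : ℤ × ℤ, z ∈ Λ → ∃ α β : ℤ,
      z.1 = α * (a 0 * (bM (f 0)).1) + β * (a 1 * (bM (f 1)).1) ∧
      z.2 = α * (a 0 * (bM (f 0)).2) + β * (a 1 * (bM (f 1)).2) := by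
    intro z hz
    have hzN : z ∈ N := hz
    have hrepr := bN.sum_repr ⟨z, hzN⟩
    have hco := congrArg (fun m : N => (m : ℤ × ℤ)) hrepr
    simp only [Fin.sum_univ_two] at hco
    refine ⟨bN.repr ⟨z, hzN⟩ 0, bN.repr ⟨z, hzN⟩ 1, ?_, ?_⟩
    · have h1 := congrArg Prod.fst hco.symm
      rw [h1]
      simp [ha 0, ha 1, Prod.smul_def, smul_eq_mul]
    · have h1 := congrArg Prod.snd hco.symm
      rw [h1]
      simp [ha 0, ha 1, Prod.smul_def, smul_eq_mul]
  obtain ⟨α, β, hd1, hd2⟩ := key d hd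
  obtain ⟨γ, δ, hv1, hv2⟩ := key v hv
  have : d.1 * v.2 - d.2 * v.1 =
      (a 0 * a 1) * ((α * δ - β * γ) *
        ((bM (f 0)).1 * (bM (f 1)).2 - (bM (f 0)).2 * (bM (f 1)).1)) := by
    rw [hd1, hd2, hv1, hv2]; ring
  rw [this, hidx]
  push_cast
  rw [← abs_mul, abs_dvd]
  exact dvd_mul_right _ _

lemma eq_of_parallel (Λ : AddSubgroup (ℤ × ℤ)) (v : ℤ × ℤ) (hvΛ : v ∈ Λ)
    (hv1 : 0 ≤ v.1) (hv2 : 0 ≤ v.2) (hv0 : v ≠ 0) (hvis : IsVisibleIn Λ v)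
    (d : ℤ × ℤ) (hdΛ : d ∈ Λ) (hd1 : 0 ≤ d.1) (hd2 : 0 ≤ d.2)
    (hdpos : 0 < d.1 + d.2) (hdle : d.1 + d.2 ≤ v.1 + v.2)
    (hcross : d.1 * v.2 = d.2 * v.1) : d = v := by
  set g : ℕ := Int.gcd v.1 v.2 with hg
  have hg0 : g ≠ 0 := by
    simp only [hg, ne_eq, Int.gcd_eq_zero_iff, not_and]
    intro h1 h2
    exact hv0 (Prod.ext h1 h2)
  have hgz0 : (0:ℤ) < (g:ℤ) := by exact_mod_cast Nat.pos_of_ne_zero hg0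
  set w1 : ℤ := v.1 / (g:ℤ) with hw1def
  set w2 : ℤ := v.2 / (g:ℤ) with hw2def
  have hw1 : (g:ℤ) * w1 = v.1 := Int.mul_ediv_cancel' (Int.gcd_dvd_left _ _)
  have hw2 : (g:ℤ) * w2 = v.2 := Int.mul_ediv_cancel' (Int.gcd_dvd_right _ _)
  have hwgcd : Int.gcd w1 w2 = 1 := by
    rw [hw1def, hw2def]
    exact Int.gcd_div_gcd_div_gcd (Nat.pos_of_ne_zero hg0)
  have hbez : (1:ℤ) = w1 * Int.gcdA w1 w2 + w2 * Int.gcdB w1 w2 := by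
    have := Int.gcd_eq_gcd_ab w1 w2
    rwa [hwgcd] at this
  have hw1n : 0 ≤ w1 := Int.ediv_nonneg hv1 (le_of_lt hgz0)
  have hw2n : 0 ≤ w2 := Int.ediv_nonneg hv2 (le_of_lt hgz0)
  have hS : 0 < w1 + w2 := by
    rcases lt_or_eq_of_le (add_nonneg hw1n hw2n) with h | h
    · exact h
    · exfalso
      have e1 : w1 = 0 := by omega
      have e2 : w2 = 0 := by omega
      apply hv0
      have e1' : v.1 = 0 := by rw [← hw1, e1, mul_zero]
      have e2' : v.2 = 0 := by rw [← hw2, e2, mul_zero]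
      exact Prod.ext (by simp [e1']) (by simp [e2'])
  have hdc : d.1 * w2 = d.2 * w1 := by
    have h := hcross
    rw [← hw1, ← hw2] at h
    have h2 : (g:ℤ) * (d.1 * w2) = (g:ℤ) * (d.2 * w1) := by linear_combination h
    exact mul_left_cancel₀ (ne_of_gt hgz0) h2
  set t : ℤ := d.1 * Int.gcdA w1 w2 + d.2 * Int.gcdB w1 w2 with ht
  have htw1 : t * w1 = d.1 := by
    rw [ht]; linear_combination d.1 * hbez.symm + Int.gcdB w1 w2 * hdc.symm
  have htw2 : t * w2 = d.2 := by
    rw [ht]; linear_combination d.2 * hbez.symm + Int.gcdA w1 w2 * hdc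
  have hts : t * (w1 + w2) = d.1 + d.2 := by linear_combination htw1 + htw2
  have ht1 : 1 ≤ t := by
    by_contra h
    push_neg at h
    have : t ≤ 0 := by omega
    nlinarith
  have hgsum : (g:ℤ) * (w1 + w2) = v.1 + v.2 := by linear_combination hw1 + hw2
  have htg : t ≤ (g:ℤ) := by
    have h := hdle
    rw [← hts, ← hgsum] at h
    exact le_of_mul_le_mul_right h hS
  rcases eq_or_lt_of_le htg with heq | hlt
  · exact Prod.ext (by rw [← htw1, heq, hw1]) (by rw [← htw2, heq, hw2])
  · exfalso
    set s : ℕ := Int.gcd t (g:ℤ) with hs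
    have hs0 : (0:ℤ) < (s:ℤ) := by
      have hsne : s ≠ 0 := by
        simp only [hs, ne_eq, Int.gcd_eq_zero_iff, not_and]
        intro h1; omega
      exact_mod_cast Nat.pos_of_ne_zero hsne
    have hsb : (s:ℤ) = t * Int.gcdA t (g:ℤ) + (g:ℤ) * Int.gcdB t (g:ℤ) :=
      Int.gcd_eq_gcd_ab t (g:ℤ)
    have hst : (s:ℤ) ∣ t := Int.gcd_dvd_left _ _
    have hsg : (s:ℤ) ∣ (g:ℤ) := Int.gcd_dvd_right _ _
    have hsle : (s:ℤ) ≤ t := Int.le_of_dvd (by omega) hst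
    set w : ℤ × ℤ := ((s:ℤ) * w1, (s:ℤ) * w2) with hwd
    have hd' : d = (t * w1, t * w2) := Prod.ext htw1.symm htw2.symm
    have hv' : v = ((g:ℤ) * w1, (g:ℤ) * w2) := Prod.ext hw1.symm hw2.symm
    have hwmem : w ∈ Λ := by
      have hwe : w = Int.gcdA t (g:ℤ) • d + Int.gcdB t (g:ℤ) • v := by
        rw [hd', hv', hwd]
        simp only [Prod.smul_mk, smul_eq_mul, Prod.mk_add_mk, Prod.mk.injEq]
        constructor
        · linear_combination w1 * hsb
        · linear_combination w2 * hsb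
      rw [hwe]
      exact AddSubgroup.add_mem _ (AddSubgroup.zsmul_mem _ hdΛ _)
        (AddSubgroup.zsmul_mem _ hvΛ _)
    set m : ℤ := (g:ℤ) / (s:ℤ) with hm
    have hms : m * (s:ℤ) = (g:ℤ) := Int.ediv_mul_cancel hsg
    have hm2 : 2 ≤ m := by
      by_contra h
      push_neg at h
      have h1 : m ≤ 1 := by omega
      nlinarith
    refine hvis m.toNat (by omega) w hwmem ?_
    have hcast : ((m.toNat : ℕ) : ℤ) = m := Int.toNat_of_nonneg (by omega)
    rw [hcast, hv', hwd]
    simp only [Prod.smul_mk, smul_eq_mul, Prod.mk.injEq]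
    constructor
    · linear_combination w1 * hms
    · linear_combination w2 * hms

theorem exists_latticePath_of_visible (Λ : AddSubgroup (ℤ × ℤ)) (hΛ : Λ.index ≠ 0)
    (v : ℤ × ℤ) (hvΛ : v ∈ Λ) (hv1 : 0 ≤ v.1) (hv2 : 0 ≤ v.2) (hv0 : v ≠ 0)
    (hvis : IsVisibleIn Λ v) (hlen : v.1 + v.2 ≤ (Λ.index : ℤ)) :
    ∃ (p : ℕ → ℤ × ℤ) (k : ℕ), p 0 = 0 ∧ p k = v ∧
      (∀ i < k, p (i + 1) - p i = ((1 : ℤ), (0 : ℤ)) ∨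
        p (i + 1) - p i = ((0 : ℤ), (1 : ℤ))) ∧
      (∀ i ≤ k, ∀ j ≤ k, i ≠ j → p j - p i ∈ Λ →
        (i = 0 ∧ j = k) ∨ (i = k ∧ j = 0)) := by
  classical
  have hvsum : (0:ℤ) < v.1 + v.2 := by
    rcases lt_or_eq_of_le (add_nonneg hv1 hv2) with h | h
    · exact h
    · exfalso
      have e1 : v.1 = 0 := by omega
      have e2 : v.2 = 0 := by omega
      exact hv0 (Prod.ext (by simp [e1]) (by simp [e2]))
  obtain ⟨k, hk⟩ : ∃ k : ℕ, (k:ℤ) = v.1 + v.2 :=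
    ⟨(v.1 + v.2).toNat, Int.toNat_of_nonneg (le_of_lt hvsum)⟩
  obtain ⟨a, ha⟩ : ∃ a : ℕ, (a:ℤ) = v.1 := ⟨v.1.toNat, Int.toNat_of_nonneg hv1⟩
  have hkpos : 0 < k := by omega
  have hak : a ≤ k := by omega
  set x : ℕ → ℕ := fun i => (i * a + (k-1)) / k with hxdef
  set p : ℕ → ℤ × ℤ := fun i => ((x i : ℤ), (i : ℤ) - (x i : ℤ)) with hpdef
  have hbounds : ∀ i : ℕ, (i:ℤ) * v.1 ≤ (k:ℤ) * (x i) ∧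
      (k:ℤ) * (x i) ≤ (i:ℤ) * v.1 + ((k:ℤ) - 1) := by
    intro i
    have h : k * x i + (i * a + (k-1)) % k = i * a + (k-1) :=
      Nat.div_add_mod (i * a + (k-1)) k
    have h2 : (i * a + (k-1)) % k < k := Nat.mod_lt _ hkpos
    have hub : k * x i ≤ i * a + (k-1) := by omega
    have hlb : i * a ≤ k * x i := by omega
    constructor
    · calc (i:ℤ) * v.1 = ((i * a : ℕ) : ℤ) := by rw [← ha]; push_cast; ring
        _ ≤ ((k * x i : ℕ) : ℤ) := by exact_mod_cast hlb
        _ = (k:ℤ) * (x i) := by push_cast; ring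
    · calc (k:ℤ) * (x i) = ((k * x i : ℕ) : ℤ) := by push_cast; ring
        _ ≤ ((i * a + (k-1) : ℕ) : ℤ) := by exact_mod_cast hub
        _ = (i:ℤ) * v.1 + ((k:ℤ) - 1) := by
            push_cast [Nat.cast_sub (show 1 ≤ k by omega)]
            rw [ha]
  have hxmono : ∀ i j : ℕ, i ≤ j → x i ≤ x j := by
    intro i j hij
    exact Nat.div_le_div_right (Nat.add_le_add_right (Nat.mul_le_mul_right a hij) _)
  have hx0 : x 0 = 0 := by
    show (0 * a + (k-1)) / k = 0
    exact Nat.div_eq_of_lt (by omega)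
  have hxk : x k = a := by
    show (k * a + (k-1)) / k = a
    rw [Nat.add_comm, Nat.add_mul_div_left _ _ hkpos, Nat.div_eq_of_lt (by omega)]
    omega
  have hstep : ∀ i : ℕ, x (i+1) = x i ∨ x (i+1) = x i + 1 := by
    intro i
    have h1 : x i ≤ x (i+1) := hxmono _ _ (Nat.le_succ _)
    have h2 : x (i+1) ≤ x i + 1 := by
      have hnum : (i+1) * a + (k-1) ≤ (i * a + (k-1)) + k := by
        have : (i+1) * a = i * a + a := by ring
        omega
      calc x (i+1) ≤ ((i * a + (k-1)) + k) / k := Nat.div_le_div_right hnum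
        _ = x i + 1 := Nat.add_div_right _ hkpos
    omega
  have key : ∀ i j : ℕ, j ≤ k → i < j → p j - p i ∈ Λ → i = 0 ∧ j = k := by
    intro i j hjk hij hmem
    have hd1 : (p j - p i).1 = (x j : ℤ) - (x i : ℤ) := by
      simp only [hpdef, Prod.fst_sub]
    have hd2 : (p j - p i).2 = ((j:ℤ) - (i:ℤ)) - ((x j : ℤ) - (x i : ℤ)) := by
      simp only [hpdef, Prod.snd_sub]; ring
    obtain ⟨hbl_i, hbu_i⟩ := hbounds i
    obtain ⟨hbl_j, hbu_j⟩ := hbounds j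
    have hdvd := index_dvd_cross Λ hΛ hmem hvΛ
    have hv2k : v.2 = (k:ℤ) - v.1 := by linarith
    have hcross_eq : (p j - p i).1 * v.2 - (p j - p i).2 * v.1 =
        ((k:ℤ) * (x j) - (j:ℤ) * v.1) - ((k:ℤ) * (x i) - (i:ℤ) * v.1) := by
      rw [hd1, hd2, hv2k]; ring
    have hkn : (k:ℤ) ≤ (Λ.index : ℤ) := by rw [hk]; exact hlen
    have hzero : (p j - p i).1 * v.2 - (p j - p i).2 * v.1 = 0 := by
      by_contra h0
      have habs : |(p j - p i).1 * v.2 - (p j - p i).2 * v.1| < (Λ.index : ℤ) := by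
        rw [hcross_eq, abs_lt]
        constructor <;> linarith
      have hle := Int.le_of_dvd (abs_pos.mpr h0) ((dvd_abs _ _).mpr hdvd)
      linarith
    have hcross0 : (p j - p i).1 * v.2 = (p j - p i).2 * v.1 := by linarith
    have hxij : x i ≤ x j := hxmono i j (le_of_lt hij)
    have hdc1 : 0 ≤ (p j - p i).1 := by rw [hd1]; omega
    have hvk : v.1 ≤ (k:ℤ) := by linarith
    have hk0 : (0:ℤ) < (k:ℤ) := by exact_mod_cast hkpos
    have hdc2 : 0 ≤ (p j - p i).2 := by
      rw [hd2]
      by_contra hcon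
      push_neg at hcon
      have hX : ((j:ℤ) - (i:ℤ)) + 1 ≤ (x j : ℤ) - (x i : ℤ) := by omega
      have hp2 := mul_le_mul_of_nonneg_left hX hk0.le
      have hprod : ((j:ℤ) - (i:ℤ)) * v.1 ≤ ((j:ℤ) - (i:ℤ)) * (k:ℤ) :=
        mul_le_mul_of_nonneg_left hvk (by omega)
      nlinarith [hp2, hprod, hbu_j, hbl_i]
    have hdsum : (p j - p i).1 + (p j - p i).2 = (j:ℤ) - (i:ℤ) := by
      rw [hd1, hd2]; ring
    have hdpos : 0 < (p j - p i).1 + (p j - p i).2 := by rw [hdsum]; omega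
    have hdle : (p j - p i).1 + (p j - p i).2 ≤ v.1 + v.2 := by
      rw [hdsum, ← hk]; omega
    have hdv := eq_of_parallel Λ v hvΛ hv1 hv2 hv0 hvis _ hmem hdc1 hdc2 hdpos hdle hcross0
    have hfin : (j:ℤ) - (i:ℤ) = (k:ℤ) := by
      rw [← hdsum, hdv]; exact hk.symm
    constructor <;> omega
  refine ⟨p, k, ?_, ?_, ?_, ?_⟩
  · refine Prod.ext ?_ ?_ <;>
      simp only [hpdef, Prod.fst_zero, Prod.snd_zero] <;> omega
  · refine Prod.ext ?_ ?_ <;> simp only [hpdef] <;> omega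
  · intro i _
    rcases hstep i with h | h
    · right
      refine Prod.ext ?_ ?_ <;>
        simp only [hpdef, Prod.fst_sub, Prod.snd_sub] <;> omega
    · left
      refine Prod.ext ?_ ?_ <;>
        simp only [hpdef, Prod.fst_sub, Prod.snd_sub] <;> omega
  · intro i hi j hj hij hmem
    rcases lt_or_gt_of_ne hij with h | h
    · exact Or.inl (key i j hj h hmem)
    · have hmem' : p i - p j ∈ Λ := by
        have := AddSubgroup.neg_mem Λ hmem
        simpa using this
      obtain ⟨h1, h2⟩ := key j i hi h hmem'
      exact Or.inr ⟨h2, h1⟩
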